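/- If a spectrahedral cone K = {x ∈ ℝ^n : Σ_i C_i x_i ⪰ 0} contains the nonnegative orthant ℝ_+^n, then K admits a normalized spectrahedral representation: matrices C''_1,...,C''_n with each C''_i ⪰ 0 and Σ_i C''_i equal to the identity, such that K = {x : Σ_i C''_i x_i ⪰ 0}. -/

import Mathlib

open Matrix

private lemma sum_mulVec_aux {α : Type*} [Fintype α] [DecidableEq α] {m k : ℕ}
    (M : α → Matrix (Fin m) (Fin k) ℝ) (v : Fin k → ℝ) :
    (∑ i, M i) *ᵥ v = ∑ i, M i *ᵥ v := by
  induction (Finset.univ : Finset α) using Finset.induction with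
  | empty => simp
  | insert a s h ih => simp [Finset.sum_insert h, add_mulVec, ih]

private lemma dotProduct_sum_aux {α : Type*} [Fintype α] [DecidableEq α] {k : ℕ}
    (v : Fin k → ℝ) (f : α → Fin k → ℝ) :
    v ⬝ᵥ (∑ i, f i) = ∑ i, v ⬝ᵥ f i := by
  induction (Finset.univ : Finset α) using Finset.induction with
  | empty => simp
  | insert a s h ih => simp [Finset.sum_insert h, dotProduct_add, ih]

/-- If a spectrahedral cone `K = {x : Σᵢ xᵢ Cᵢ ⪰ 0}` contains the nonnegative orthant,
then `K` admits a normalized spectrahedral representation: matrices `C''ᵢ ⪰ 0` summing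
to the identity and defining the same cone. -/
theorem normalized_spectrahedral_representation (n k : ℕ)
    (C : Fin n → Matrix (Fin k) (Fin k) ℝ) (hsymm : ∀ i, (C i).IsSymm)
    (horthant : ∀ x : Fin n → ℝ, (∀ i, 0 ≤ x i) → (∑ i, x i • C i).PosSemidef) :
    ∃ (k' : ℕ) (C'' : Fin n → Matrix (Fin k') (Fin k') ℝ),
      (∀ i, (C'' i).PosSemidef) ∧
      (∑ i, C'' i) = (1 : Matrix (Fin k') (Fin k') ℝ) ∧
      (∀ x : Fin n → ℝ, (∑ i, x i • C i).PosSemidef ↔ (∑ i, x i • C'' i).PosSemidef) := by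
  classical
  have hC : ∀ i, (C i).PosSemidef := by
    intro i
    have h := horthant (Pi.single i 1) (by
      intro j; by_cases h : j = i <;> simp [Pi.single_apply, h])
    simpa [Pi.single_apply, ite_smul] using h
  set S : Matrix (Fin k) (Fin k) ℝ := ∑ i, C i with hSdef
  have hSpsd : S.PosSemidef := by
    have h := horthant (fun _ => 1) (fun _ => zero_le_one)
    simpa using h
  have hS : S.IsHermitian := hSpsd.1
  set lam := hS.eigenvalues with hlam
  have hlam_nonneg : ∀ j, 0 ≤ lam j := hSpsd.eigenvalues_nonneg
  set U : Matrix (Fin k) (Fin k) ℝ := (hS.eigenvectorUnitary : Matrix (Fin k) (Fin k) ℝ) with hU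
  have hUU : star U * U = 1 := by
    simpa [hU] using unitary.coe_star_mul_self hS.eigenvectorUnitary
  have hUU' : U * star U = 1 := by
    simpa [hU] using unitary.coe_mul_star_self hS.eigenvectorUnitary
  have hspec : S = U * diagonal (RCLike.ofReal ∘ lam) * star U := hS.spectral_theorem
  have hd : (RCLike.ofReal ∘ lam : Fin k → ℝ) = lam := by
    funext j; simp [RCLike.ofReal]
  rw [hd] at hspec
  -- kernel of S is in kernel of each C i
  have hker : ∀ v : Fin k → ℝ, S *ᵥ v = 0 → ∀ i, C i *ᵥ v = 0 := by
    intro v hv i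
    have hsum : ∑ i, v ⬝ᵥ (C i *ᵥ v) = 0 := by
      have h0 : v ⬝ᵥ (S *ᵥ v) = 0 := by rw [hv]; simp
      rw [← h0, hSdef, sum_mulVec_aux, dotProduct_sum_aux]
    have hnn : ∀ i ∈ Finset.univ, (0:ℝ) ≤ v ⬝ᵥ (C i *ᵥ v) := fun i _ => by
      simpa using (hC i).dotProduct_mulVec_nonneg v
    have hzero : v ⬝ᵥ (C i *ᵥ v) = 0 :=
      (Finset.sum_eq_zero_iff_of_nonneg hnn).mp hsum i (Finset.mem_univ i)
    exact ((hC i).dotProduct_mulVec_zero_iff v).mp (by simpa using hzero)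
  set k' : ℕ := Fintype.card {j : Fin k // lam j ≠ 0} with hk'
  set e : Fin k' ≃ {j : Fin k // lam j ≠ 0} := (Fintype.equivFin _).symm with he
  have hlam_pos : ∀ j' : Fin k', 0 < lam (e j') :=
    fun j' => lt_of_le_of_ne (hlam_nonneg _) (Ne.symm (e j').2)
  have hsqrt_ne : ∀ j' : Fin k', Real.sqrt (lam (e j')) ≠ 0 :=
    fun j' => (Real.sqrt_pos.mpr (hlam_pos j')).ne'
  set E : Matrix (Fin k') (Fin k) ℝ :=
    Matrix.of (fun j' j => if j = (e j' : Fin k) then (Real.sqrt (lam (e j')))⁻¹ else 0) with hE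
  set B : Matrix (Fin k') (Fin k) ℝ := E * star U with hB
  have hBH : Bᴴ = U * Eᴴ := by
    rw [hB, conjTranspose_mul]
    simp [Matrix.star_eq_conjTranspose]
  have hBMB : ∀ x : Fin n → ℝ, ∑ i, x i • (B * C i * Bᴴ) = B * (∑ i, x i • C i) * Bᴴ := by
    intro x
    rw [Matrix.mul_sum, Matrix.sum_mul]
    refine Finset.sum_congr rfl fun i _ => ?_
    rw [Matrix.mul_smul, Matrix.smul_mul]
  refine ⟨k', fun i => B * C i * Bᴴ, fun i => (hC i).mul_mul_conjTranspose_same B, ?_, ?_⟩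
  · -- sum is identity
    have h1 : (∑ i, B * C i * Bᴴ) = B * S * Bᴴ := by
      rw [hSdef, Matrix.mul_sum, Matrix.sum_mul]
    rw [h1, hspec, hB, hBH]
    have h2 : E * star U * (U * diagonal lam * star U) * (U * Eᴴ)
        = E * diagonal lam * Eᴴ := by
      calc E * star U * (U * diagonal lam * star U) * (U * Eᴴ)
          = E * ((star U * U) * (diagonal lam * ((star U * U) * Eᴴ))) := by
            simp only [Matrix.mul_assoc]
        _ = E * diagonal lam * Eᴴ := by rw [hUU]; simp [Matrix.mul_assoc]
    rw [h2]
    ext j' l'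
    rw [Matrix.mul_apply]
    simp only [Matrix.mul_diagonal, hE, conjTranspose_apply, of_apply, star_trivial]
    rcases eq_or_ne j' l' with rfl | hne
    · rw [Finset.sum_eq_single (e j' : Fin k)]
      · rw [Matrix.one_apply_eq, if_pos rfl]
        rw [← Real.mul_self_sqrt (hlam_nonneg (e j' : Fin k))]
        field_simp
        rw [Real.sqrt_sq (Real.sqrt_nonneg _)]
        exact div_self (pow_ne_zero 2 (hsqrt_ne _))
      · intro b _ hb; simp [if_neg hb]
      · intro h; exact absurd (Finset.mem_univ _) h
    · rw [Matrix.one_apply_ne hne]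
      refine Finset.sum_eq_zero fun j _ => ?_
      by_cases h1 : j = (e j' : Fin k)
      · by_cases h2 : j = (e l' : Fin k)
        · exact absurd (e.injective (Subtype.coe_injective (h1.symm.trans h2))) hne
        · rw [if_neg h2]; ring
      · rw [if_neg h1]; ring
  · -- same cone
    intro x
    set M : Matrix (Fin k) (Fin k) ℝ := ∑ i, x i • C i with hM
    rw [hBMB x, ← hM]
    constructor
    · intro h; exact h.mul_mul_conjTranspose_same B
    · intro h
      have hMH : M.IsHermitian := by
        show Mᴴ = M
        rw [hM, Matrix.conjTranspose_sum]
        refine Finset.sum_congr rfl fun i _ => ?_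
        rw [Matrix.conjTranspose_smul, (hC i).1.eq, star_trivial]
      have hMT : Mᵀ = M := by
        rw [← Matrix.conjTranspose_eq_transpose_of_trivial]; exact hMH
      have hMker : ∀ v : Fin k → ℝ, S *ᵥ v = 0 → M *ᵥ v = 0 := by
        intro v hv
        rw [hM, sum_mulVec_aux]
        refine Finset.sum_eq_zero fun i _ => ?_
        rw [Matrix.smul_mulVec, hker v hv i, smul_zero]
      refine PosSemidef.of_dotProduct_mulVec_nonneg hMH fun u => ?_
      rw [star_trivial]
      set c : Fin k → ℝ := star U *ᵥ u with hc
      set c' : Fin k → ℝ := fun j => if lam j ≠ 0 then c j else 0 with hc'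
      set w : Fin k' → ℝ := fun j' => Real.sqrt (lam (e j')) * c (e j') with hw
      set z : Fin k → ℝ := Bᴴ *ᵥ w with hz
      have hEw : Eᴴ *ᵥ w = c' := by
        funext j
        have hexp : (Eᴴ *ᵥ w) j
            = ∑ j', (if j = (e j' : Fin k) then (Real.sqrt (lam (e j')))⁻¹ else 0)
                * (Real.sqrt (lam (e j')) * c (e j')) := by
          simp [mulVec, dotProduct, hE, hw, conjTranspose_apply]
        rw [hexp]
        by_cases hj : lam j ≠ 0
        · rw [Finset.sum_eq_single (e.symm ⟨j, hj⟩)]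
          · simp only [Equiv.apply_symm_apply, if_true]
            show (Real.sqrt (lam j))⁻¹ * (Real.sqrt (lam j) * c j)
                = if lam j ≠ 0 then c j else 0
            rw [if_pos hj, ← mul_assoc,
              inv_mul_cancel₀ (Real.sqrt_ne_zero'.mpr
                (lt_of_le_of_ne (hlam_nonneg j) (Ne.symm hj))), one_mul]
          · intro b _ hb
            rw [if_neg, zero_mul]
            intro hjb
            exact hb (by rw [← Equiv.symm_apply_apply e b]; congr 1; exact Subtype.ext hjb.symm)
          · intro h; exact absurd (Finset.mem_univ _) h
        · show _ = if lam j ≠ 0 then c j else 0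
          rw [if_neg hj]
          refine Finset.sum_eq_zero fun j'' _ => ?_
          rw [if_neg, zero_mul]
          intro hjj
          exact (e j'').2 (hjj ▸ (not_ne_iff.mp hj))
      have hzU : z = U *ᵥ c' := by rw [hz, hBH, ← mulVec_mulVec, hEw]
      have huc : u = U *ᵥ c := by rw [hc, mulVec_mulVec, hUU', one_mulVec]
      have hdiag : diagonal lam *ᵥ (c - c') = 0 := by
        funext j
        show (diagonal lam *ᵥ (c - c')) j = (0 : Fin k → ℝ) j
        rw [mulVec_diagonal]
        by_cases hj : lam j ≠ 0
        · simp [hc', Pi.sub_apply, hj]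
        · simp [Pi.sub_apply, not_ne_iff.mp hj]
      have hkey : S * U = U * diagonal lam := by
        rw [hspec, Matrix.mul_assoc, hUU, Matrix.mul_one]
      have hSuz : S *ᵥ (u - z) = 0 := by
        rw [huc, hzU, ← mulVec_sub, mulVec_mulVec, hkey, ← mulVec_mulVec, hdiag, mulVec_zero]
      have hMuz : M *ᵥ (u - z) = 0 := hMker _ hSuz
      have hMu : M *ᵥ u = M *ᵥ z := sub_eq_zero.mp (by rw [← mulVec_sub, hMuz])
      have h1 : (u - z) ⬝ᵥ (M *ᵥ z) = 0 := by
        rw [dotProduct_mulVec, ← mulVec_transpose, hMT, hMuz, zero_dotProduct]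
      have h2 : z ⬝ᵥ (M *ᵥ z) = w ⬝ᵥ ((B * M * Bᴴ) *ᵥ w) := by
        rw [← mulVec_mulVec, ← mulVec_mulVec, dotProduct_mulVec w B,
          ← mulVec_transpose, ← Matrix.conjTranspose_eq_transpose_of_trivial, ← hz]
      have h3 : u ⬝ᵥ (M *ᵥ u) = z ⬝ᵥ (M *ᵥ z) := by
        rw [hMu]
        have h4 := sub_dotProduct u z (M *ᵥ z)
        rw [h1] at h4
        linarith
      have hnn := h.dotProduct_mulVec_nonneg w
      rw [star_trivial] at hnn
      rw [h3, h2]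
      exact hnn
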